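/- If Φ is an upper triangular matrix (operator) with Φ*Φ = J² + 4τ(τ−1)I for a bounded self-adjoint J with ‖J‖ ≤ 1 and τ > 1, and J_* := ΦJΦ⁻¹, then J_* is self-adjoint and satisfies ΦΦ* = J_*² + 4τ(τ−1)I. -/

import Mathlib

open ContinuousLinearMap

/-- If `Φ` is an upper triangular invertible operator on `ℓ²(ℤ₊)` with
`Φ*Φ = J² + 4τ(τ−1)I` for a bounded self-adjoint `J` with `‖J‖ ≤ 1` and `τ > 1`,
and `J_* := ΦJΦ⁻¹`, then `J_*` is self-adjoint and `ΦΦ* = J_*² + 4τ(τ−1)I`. -/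
theorem darboux_factorization
    (J : lp (fun _ : ℕ => ℂ) 2 →L[ℂ] lp (fun _ : ℕ => ℂ) 2)
    (hJ : IsSelfAdjoint J) (hJnorm : ‖J‖ ≤ 1)
    (τ : ℝ) (hτ : 1 < τ)
    (Φ Φinv : lp (fun _ : ℕ => ℂ) 2 →L[ℂ] lp (fun _ : ℕ => ℂ) 2)
    (hΦ1 : Φ * Φinv = 1) (hΦ2 : Φinv * Φ = 1)
    (hTri : ∀ m n : ℕ, n < m →
      (inner ℂ (lp.single 2 m (1 : ℂ)) (Φ (lp.single 2 n (1 : ℂ))) : ℂ) = 0)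
    (hΦ : adjoint Φ * Φ
      = J ^ 2 + ((4 * τ * (τ - 1) : ℝ) : ℂ) • (1 : lp (fun _ : ℕ => ℂ) 2 →L[ℂ] lp (fun _ : ℕ => ℂ) 2)) :
    IsSelfAdjoint (Φ * J * Φinv) ∧
    Φ * adjoint Φ
      = (Φ * J * Φinv) ^ 2
        + ((4 * τ * (τ - 1) : ℝ) : ℂ) • (1 : lp (fun _ : ℕ => ℂ) 2 →L[ℂ] lp (fun _ : ℕ => ℂ) 2) := by
  set c : ℂ := ((4 * τ * (τ - 1) : ℝ) : ℂ) with hc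
  have hsA : adjoint Φ = star Φ := (star_eq_adjoint Φ).symm
  have hstarJ : star J = J := hJ
  -- J commutes with star Φ * Φ = J² + c•1
  have hcomm : J * (star Φ * Φ) = (star Φ * Φ) * J := by
    rw [← hsA, hΦ]; noncomm_ring
  have h1 : star Φinv * star Φ = 1 := by rw [← star_mul, hΦ1, star_one]
  have key : Φ * J * Φinv = star Φinv * J * star Φ := by
    calc Φ * J * Φinv
        = (star Φinv * star Φ) * (Φ * J * Φinv) := by rw [h1, one_mul]
      _ = star Φinv * ((star Φ * Φ) * J) * Φinv := by simp only [mul_assoc]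
      _ = star Φinv * (J * (star Φ * Φ)) * Φinv := by rw [hcomm]
      _ = star Φinv * J * star Φ * (Φ * Φinv) := by simp only [mul_assoc]
      _ = star Φinv * J * star Φ := by rw [hΦ1, mul_one]
  constructor
  · show star (Φ * J * Φinv) = Φ * J * Φinv
    rw [star_mul, star_mul, hstarJ, key, mul_assoc]
  · calc Φ * adjoint Φ
        = Φ * (adjoint Φ * Φ) * Φinv := by
          rw [mul_assoc, mul_assoc, hΦ1, mul_one]
      _ = Φ * (J ^ 2 + c • 1) * Φinv := by rw [hΦ]
      _ = (Φ * J * Φinv) ^ 2 + c • 1 := by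
          simp only [mul_add, add_mul, mul_smul_comm, smul_mul_assoc, mul_one, one_mul,
            pow_two, mul_assoc]
          rw [hΦ1]
          congr 1
          rw [← mul_assoc Φinv Φ, hΦ2, one_mul]
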